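/- arXiv:2009.10961 — 5 statements merged into one kernel-verified Lean document; each statement's English description precedes it below -/
import Mathlib

section
/- Let (a_k)_{k≥0} be an arbitrary sequence of formal Laurent series in ℂ((z⁻¹)), and define a ℂ-linear map A : ℂ[z] → ℂ((z⁻¹)) by A·p := Σ_{k=0}^{deg p} a_k·p^{(k)} (a finite sum, since p^{(k)} = 0 for k > deg p). Then A maps ℂ[z] into ℂ[z] if and only if every coefficient a_k is a polynomial in z. (Sato–Noumi lemma: an operator in 𝒟 = ℂ((z⁻¹))[[d/dz]] stabilizes H₊ = ℂ[z] if and only if it lies in 𝒟₊ = ℂ[z][[d/dz]].) -/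
noncomputable section

/-- `H = ℂ((z⁻¹))`: formal Laurent series in `u = z⁻¹`. -/
abbrev H : Type := LaurentSeries ℂ

/-- The coefficient of `z^k` of a Laurent series in `z⁻¹`. -/
def zc (f : H) (k : ℤ) : ℂ := f.coeff (-k)

/-- `deg_z f ≤ d`: all coefficients of `z^k` with `k > d` vanish. -/
def degLE (f : H) (d : ℤ) : Prop := ∀ k : ℤ, d < k → zc f k = 0

/-- The element `z` of `H`. -/
def zH : H := HahnSeries.single (-1 : ℤ) (1 : ℂ)

/-- Multiplication by `z` as a `ℂ`-linear endomorphism of `H`. -/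
def Mz : H →ₗ[ℂ] H where
  toFun f := zH * f
  map_add' f g := mul_add zH f g
  map_smul' c f := by
    simp only [RingHom.id_apply, ← HahnSeries.single_zero_mul_eq_smul]
    ring

/-- The derivative `d/dz` as a `ℂ`-linear endomorphism of `H`. -/
def Dz : H →ₗ[ℂ] H where
  toFun f :=
    { coeff := fun n => ((1 - n : ℤ) : ℂ) * f.coeff (n - 1)
      isPWO_support' := by
        refine Set.IsPWO.mono (Set.IsPWO.image_of_monotone f.isPWO_support'
          (f := fun m : ℤ => m + 1) (fun a b hab => by dsimp only; omega)) ?_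
        intro n hn
        simp only [Function.mem_support] at hn
        refine ⟨n - 1, ?_, by ring⟩
        intro h
        exact hn (by rw [h, mul_zero]) }
  map_add' f g := by
    ext n
    simp [HahnSeries.coeff_add, mul_add]
  map_smul' c f := by
    ext n
    simp [HahnSeries.coeff_smul]
    ring

/-- `H₊ = ℂ[z]`: series with no negative powers of `z`. -/
def Hplus : Submodule ℂ H where
  carrier := {f | ∀ k : ℤ, k < 0 → zc f k = 0}
  add_mem' := by
    intro f g hf hg k hk
    simp only [Set.mem_setOf_eq, zc, HahnSeries.coeff_add] at *
    rw [hf k hk, hg k hk, add_zero]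
  zero_mem' := by intro k hk; simp [zc]
  smul_mem' := by
    intro c f hf k hk
    simp only [Set.mem_setOf_eq, zc, HahnSeries.coeff_smul] at *
    rw [hf k hk, smul_zero]

/-- `H₋ = z⁻¹ℂ[[z⁻¹]]`: series with only negative powers of `z`. -/
def Hminus : Submodule ℂ H where
  carrier := {f | ∀ k : ℤ, 0 ≤ k → zc f k = 0}
  add_mem' := by
    intro f g hf hg k hk
    simp only [Set.mem_setOf_eq, zc, HahnSeries.coeff_add] at *
    rw [hf k hk, hg k hk, add_zero]
  zero_mem' := by intro k hk; simp [zc]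
  smul_mem' := by
    intro c f hf k hk
    simp only [Set.mem_setOf_eq, zc, HahnSeries.coeff_smul] at *
    rw [hf k hk, smul_zero]

/-- The projection `π₊ : H → H₊` discarding all negative powers of `z`. -/
def piPlus : H →ₗ[ℂ] H where
  toFun f :=
    { coeff := fun n => if 0 < n then 0 else f.coeff n
      isPWO_support' := by
        refine Set.IsPWO.mono f.isPWO_support' ?_
        intro n hn
        simp only [Function.mem_support] at hn
        by_cases h : 0 < n
        · exact absurd (if_pos h) hn
        · rw [if_neg h] at hn; exact hn }
  map_add' f g := by
    ext n
    by_cases h : 0 < n <;> simp [HahnSeries.coeff_add, h]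
  map_smul' c f := by
    ext n
    by_cases h : 0 < n <;> simp [HahnSeries.coeff_smul, h]

/-- The statement that `A` is the operator `Σ_{k≥0} a_k (d/dz)^k`, where all
`deg a_k ≤ e`: partial sums converge to `A f` coefficientwise. -/
def IsOp (a : ℕ → H) (e : ℤ) (A : H →ₗ[ℂ] H) : Prop :=
  (∀ k, degLE (a k) e) ∧
  ∀ (f : H) (d : ℤ), degLE f d → ∀ N : ℕ,
    degLE (A f - ∑ k ∈ Finset.range N, a k * ((Dz ^ k) f)) (d + e - N)

/-- The operator `A` stabilizes the subspace `W`. -/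
def Stab (A : H →ₗ[ℂ] H) (W : Submodule ℂ H) : Prop := ∀ f ∈ W, A f ∈ W

/-- The big cell of the Sato Grassmannian: `π₊` restricts to a bijection of `W` onto `ℂ[z]`. -/
def BigCell (W : Submodule ℂ H) : Prop :=
  Set.BijOn piPlus (W : Set H) (Hplus : Set H)

/-- The pair `(P, Q)` belongs to `Gr_𝒟`. -/
def GrD (P Q : H →ₗ[ℂ] H) : Prop :=
  (∃ a : ℕ → H, IsOp a (-2) (P - Dz)) ∧
  (∃ b : ℕ → H, IsOp b (-1) (Q - Mz)) ∧
  P ∘ₗ Q - Q ∘ₗ P = LinearMap.id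


lemma Dz_coeff (f : H) (n : ℤ) : (Dz f).coeff n = ((1 - n : ℤ) : ℂ) * f.coeff (n - 1) := rfl

lemma mem_Hplus_iff (f : H) : f ∈ Hplus ↔ ∀ n : ℤ, 0 < n → f.coeff n = 0 := by
  constructor
  · intro hf n hn
    have := hf (-n) (by omega)
    simpa [zc] using this
  · intro hf k hk
    exact hf (-k) (by omega)

lemma single_mem_Hplus (m : ℤ) (hm : m ≤ 0) (c : ℂ) : HahnSeries.single m c ∈ Hplus := by
  rw [mem_Hplus_iff]
  intro n hn
  rw [HahnSeries.coeff_single, if_neg (by omega)]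

lemma Dz_mem {f : H} (hf : f ∈ Hplus) : Dz f ∈ Hplus := by
  rw [mem_Hplus_iff] at *
  intro n hn
  rw [Dz_coeff]
  by_cases h : n = 1
  · subst h; norm_num
  · rw [hf (n - 1) (by omega), mul_zero]

lemma Dz_pow_mem {f : H} (hf : f ∈ Hplus) (k : ℕ) : (Dz ^ k) f ∈ Hplus := by
  induction k with
  | zero => simpa using hf
  | succ k ih => rw [pow_succ', Module.End.mul_apply]; exact Dz_mem ih

lemma mul_mem_Hplus {f g : H} (hf : f ∈ Hplus) (hg : g ∈ Hplus) : f * g ∈ Hplus := by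
  rw [mem_Hplus_iff] at *
  intro n hn
  rw [HahnSeries.coeff_mul]
  apply Finset.sum_eq_zero
  rintro ⟨i, j⟩ hij
  rw [Finset.mem_addAntidiagonal] at hij
  obtain ⟨hi, hj, hsum⟩ := hij
  exfalso
  have h1 : i ≤ 0 := le_of_not_gt fun h => hi (hf i h)
  have h2 : j ≤ 0 := le_of_not_gt fun h => hj (hg j h)
  omega

lemma Dz_single (m : ℤ) (c : ℂ) :
    Dz (HahnSeries.single m c) = HahnSeries.single (m + 1) (((-m : ℤ) : ℂ) * c) := by
  ext n
  rw [Dz_coeff, HahnSeries.coeff_single, HahnSeries.coeff_single]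
  by_cases h : n = m + 1
  · rw [if_pos (by omega), if_pos h]
    have : (1 - n : ℤ) = -m := by omega
    rw [this]
  · rw [if_neg (by omega), if_neg h, mul_zero]

lemma Dz_pow_coeff (k : ℕ) (f : H) (n : ℤ) :
    ((Dz ^ k) f).coeff n =
      (∏ i ∈ Finset.range k, (((i : ℤ) + 1 - n : ℤ) : ℂ)) * f.coeff (n - k) := by
  induction k generalizing f n with
  | zero => simp
  | succ k ih =>
    rw [pow_succ, Module.End.mul_apply, ih, Dz_coeff, Finset.prod_range_succ]
    have h1 : (1 - (n - k) : ℤ) = ((k : ℤ) + 1 - n) := by omega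
    have h2 : (n - k - 1 : ℤ) = n - (k + 1 : ℕ) := by push_cast; omega
    rw [h1, h2]
    ring

lemma Dz_pow_eq_zero (f : H) (hf : f ∈ Hplus) : ∃ N : ℕ, (Dz ^ N) f = 0 := by
  by_cases h0 : f = 0
  · exact ⟨0, by simp [h0]⟩
  refine ⟨(1 - f.order).toNat, ?_⟩
  ext n
  rw [Dz_pow_coeff]
  set N := (1 - f.order).toNat with hNdef
  by_cases hc : f.coeff (n - N) = 0
  · simp [hc]
  have h1 : f.order ≤ n - N := le_of_not_gt fun h => hc (HahnSeries.coeff_eq_zero_of_lt_order h)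
  have h2 : n - N ≤ 0 := le_of_not_gt fun h => hc ((mem_Hplus_iff f).1 hf _ h)
  have hm : f.order ≤ 0 := by
    by_contra h
    exact HahnSeries.coeff_order_eq_zero.not.2 h0 ((mem_Hplus_iff f).1 hf _ (by omega))
  have hN : (N : ℤ) = 1 - f.order := Int.toNat_of_nonneg (by omega)
  have hmem : (n - 1).toNat ∈ Finset.range N := by
    rw [Finset.mem_range]; omega
  rw [Finset.prod_eq_zero hmem]
  · simp
  · have ht : (((n - 1).toNat : ℤ)) = n - 1 := Int.toNat_of_nonneg (by omega)
    rw [ht]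
    norm_num

/-- **Sato–Noumi lemma.** The operator `A·p = Σ_{k=0}^{deg p} a_k p^{(k)}`
maps `ℂ[z]` into `ℂ[z]` if and only if every coefficient `a_k` is a polynomial in `z`. -/
theorem sato_noumi (a : ℕ → H) (A : H → H)
    (hA : ∀ p ∈ Hplus, ∀ N : ℕ, (Dz ^ N) p = 0 →
      A p = ∑ k ∈ Finset.range N, a k * ((Dz ^ k) p)) :
    (∀ p ∈ Hplus, A p ∈ Hplus) ↔ (∀ k, a k ∈ Hplus) := by
  constructor
  · intro hstab n
    induction n using Nat.strong_induction_on with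
    | _ n ih =>
      set p : H := HahnSeries.single (-(n : ℤ)) 1 with hpdef
      have hp : p ∈ Hplus := single_mem_Hplus _ (by omega) _
      have key : ∀ k ≤ n, ∃ c : ℂ, c ≠ 0 ∧
          (Dz ^ k) p = HahnSeries.single (-(n : ℤ) + k) c := by
        intro k hk
        induction k with
        | zero => exact ⟨1, one_ne_zero, by simp [hpdef]⟩
        | succ k ihk =>
          obtain ⟨c, hc, hck⟩ := ihk (by omega)
          refine ⟨((n : ℂ) - k) * c, mul_ne_zero ?_ hc, ?_⟩
          · have : ((n : ℤ) - k) ≠ 0 := by omega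
            exact_mod_cast fun h => this (by exact_mod_cast h)
          · rw [pow_succ', Module.End.mul_apply, hck, Dz_single]
            have hidx : (-(n : ℤ) + (k : ℤ) + 1) = (-(n : ℤ) + ((k + 1 : ℕ) : ℤ)) := by
              push_cast; ring
            have hval : ((-(-(n : ℤ) + (k : ℤ)) : ℤ) : ℂ) = ((n : ℂ) - (k : ℂ)) := by
              push_cast; ring
            rw [hidx, hval]
      obtain ⟨c, hc, hcn⟩ := key n le_rfl
      have hz0 : (-(n : ℤ) + n) = 0 := by omega
      rw [hz0] at hcn
      have hDzero : (Dz ^ (n + 1)) p = 0 := by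
        rw [pow_succ', Module.End.mul_apply, hcn, Dz_single]
        simp
      have hAp := hA p hp (n + 1) hDzero
      rw [Finset.sum_range_succ, hcn] at hAp
      have hS : (∑ k ∈ Finset.range n, a k * ((Dz ^ k) p)) ∈ Hplus := by
        apply Submodule.sum_mem
        intro k hk
        rw [Finset.mem_range] at hk
        obtain ⟨ck, _, hck⟩ := key k (le_of_lt hk)
        rw [hck]
        exact mul_mem_Hplus (ih k hk) (single_mem_Hplus _ (by omega) _)
      have hlast : a n * HahnSeries.single (0 : ℤ) c = c • a n := by
        rw [mul_comm, HahnSeries.single_zero_mul_eq_smul]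
      have hmem : c • a n ∈ Hplus := by
        rw [← hlast]
        have : a n * HahnSeries.single (0 : ℤ) c = A p - ∑ k ∈ Finset.range n, a k * ((Dz ^ k) p) := by
          rw [hAp]; ring
        rw [this]
        exact Submodule.sub_mem _ (hstab p hp) hS
      have := Submodule.smul_mem Hplus c⁻¹ hmem
      rwa [smul_smul, inv_mul_cancel₀ hc, one_smul] at this
  · intro ha p hp
    obtain ⟨N, hN⟩ := Dz_pow_eq_zero p hp
    rw [hA p hp N hN]
    exact Submodule.sum_mem _ fun k _ => mul_mem_Hplus (ha k) (Dz_pow_mem hp k)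
end
end

section
/- Let W be a subspace in the big cell of the Sato Grassmannian, and let (a_k)_{k≥0} be a sequence in ℂ((z⁻¹)) with deg a_k ≤ −1 for all k, defining the endomorphism A·f := Σ_{k≥0} a_k·(d/dz)^k f of H. If A(W) ⊆ W, then A = 0, i.e. a_k = 0 for all k. (For any point of the big cell there are no nontrivial Kac–Schwarz operators in 𝒟₋.) -/
noncomputable section

namespace KS

lemma zc_add (f g : H) (k : ℤ) : zc (f + g) k = zc f k + zc g k := rfl
lemma zc_sub (f g : H) (k : ℤ) : zc (f - g) k = zc f k - zc g k := rfl

lemma degLE_mul {f g : H} {d e : ℤ} (hf : degLE f d) (hg : degLE g e) :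
    degLE (f * g) (d + e) := by
  intro k hk
  rw [zc, HahnSeries.coeff_mul]
  refine Finset.sum_eq_zero fun ij hij => ?_
  rw [Finset.mem_addAntidiagonal] at hij
  by_cases h1 : ij.1 < -d
  · have : zc f (-ij.1) = 0 := hf _ (by omega)
    rw [zc, neg_neg] at this
    rw [this, zero_mul]
  · have h2 : ij.2 < -e := by omega
    have : zc g (-ij.2) = 0 := hg _ (by omega)
    rw [zc, neg_neg] at this
    rw [this, mul_zero]

lemma zc_Dz (f : H) (k : ℤ) : zc (Dz f) k = ((k + 1 : ℤ) : ℂ) * zc f (k + 1) := by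
  show ((1 - (-k) : ℤ) : ℂ) * f.coeff (-k - 1) = _
  rw [zc, show -k - 1 = -(k+1) by ring]
  push_cast
  ring

lemma degLE_Dz {f : H} {d : ℤ} (hf : degLE f d) : degLE (Dz f) (d - 1) := by
  intro k hk
  rw [zc_Dz, hf (k + 1) (by omega), mul_zero]

lemma degLE_Dz_pow {f : H} {d : ℤ} (hf : degLE f d) (k : ℕ) :
    degLE ((Dz ^ k) f) (d - k) := by
  induction k with
  | zero => simpa using hf
  | succ n ih =>
      have : (Dz ^ (n + 1)) f = Dz ((Dz ^ n) f) := by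
        rw [pow_succ']; rfl
      rw [this]
      have := degLE_Dz ih
      intro m hm
      exact this m (by push_cast at hm ⊢; omega)

lemma Dz_single (t : ℤ) (c : ℂ) :
    Dz (HahnSeries.single t c) = HahnSeries.single (t + 1) ((-t : ℤ) * c) := by
  ext n
  show ((1 - n : ℤ) : ℂ) * (HahnSeries.single t c).coeff (n - 1) = _
  by_cases h : n = t + 1
  · subst h
    rw [show t + 1 - 1 = t by ring, HahnSeries.coeff_single_same,
      HahnSeries.coeff_single_same]
    push_cast
    ring
  · rw [HahnSeries.coeff_single_of_ne (by omega), HahnSeries.coeff_single_of_ne h, mul_zero]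

/-- Falling factorial as a complex number. -/
def ff (n k : ℕ) : ℂ := ∏ i ∈ Finset.range k, ((n : ℂ) - i)

lemma ff_self_ne_zero (n : ℕ) : ff n n ≠ 0 := by
  refine Finset.prod_ne_zero_iff.mpr fun i hi => ?_
  rw [Finset.mem_range] at hi
  intro h
  have : (n : ℂ) = i := by linear_combination h
  exact_mod_cast absurd (Nat.cast_injective this) (by omega)

lemma ff_eq_zero {n k : ℕ} (h : n < k) : ff n k = 0 := by
  refine Finset.prod_eq_zero (Finset.mem_range.mpr h) ?_
  simp

lemma Dz_pow_single (n k : ℕ) :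
    (Dz ^ k) (HahnSeries.single (-(n : ℤ)) (1 : ℂ)) =
      HahnSeries.single ((k : ℤ) - n) (ff n k) := by
  induction k with
  | zero => simp [ff]
  | succ m ih =>
      have : (Dz ^ (m + 1)) (HahnSeries.single (-(n : ℤ)) (1 : ℂ)) =
          Dz ((Dz ^ m) (HahnSeries.single (-(n : ℤ)) (1 : ℂ))) := by
        rw [pow_succ']; rfl
      rw [this, ih, Dz_single]
      congr 1
      · push_cast; ring
      · simp only [ff, Finset.prod_range_succ]
        push_cast
        ring

lemma zc_mul_single (f : H) (t : ℤ) (c : ℂ) (m : ℤ) :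
    zc (f * HahnSeries.single t c) m = zc f (m + t) * c := by
  rw [zc, zc, show -m = -(m + t) + t by ring, HahnSeries.coeff_mul_single_add]

lemma degLE_single (n : ℕ) : degLE (HahnSeries.single (-(n : ℤ)) (1 : ℂ)) n := by
  intro k hk
  rw [zc, HahnSeries.coeff_single_of_ne (by omega)]

end KS
namespace KS

lemma zc_sum {ι : Type*} (s : Finset ι) (f : ι → H) (m : ℤ) :
    zc (∑ i ∈ s, f i) m = ∑ i ∈ s, zc (f i) m := by
  classical
  induction s using Finset.induction with
  | empty => simp [zc]
  | @insert _ _ h ih => rw [Finset.sum_insert h, Finset.sum_insert h, zc_add, ih]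

lemma zcA_single {a : ℕ → H} {A : H →ₗ[ℂ] H} (hA : IsOp a (-1) A) (n N : ℕ) (m : ℤ)
    (hm : (n : ℤ) - 1 - N < m) :
    zc (A (HahnSeries.single (-(n : ℤ)) 1)) m
      = ∑ k ∈ Finset.range N, ff n k * zc (a k) (m + ((k : ℤ) - n)) := by
  set ζ : H := HahnSeries.single (-(n : ℤ)) (1 : ℂ) with hζ
  have hrem := hA.2 ζ n (degLE_single n) N m (by omega)
  have hsum : zc (∑ k ∈ Finset.range N, a k * ((Dz ^ k) ζ)) m
      = ∑ k ∈ Finset.range N, ff n k * zc (a k) (m + ((k : ℤ) - n)) := by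
    rw [zc_sum]
    refine Finset.sum_congr rfl fun k _ => ?_
    rw [hζ, Dz_pow_single, zc_mul_single]; ring
  have h2 := zc_sub (A ζ) (∑ k ∈ Finset.range N, a k * ((Dz ^ k) ζ)) m
  rw [hrem, hsum] at h2
  linear_combination -h2

lemma degLE_A {a : ℕ → H} {A : H →ₗ[ℂ] H} (hA : IsOp a (-1) A) {f : H} {d : ℤ}
    (hf : degLE f d) : degLE (A f) (d - 1) := by
  have h := hA.2 f d hf 0
  simp only [Finset.range_zero, Finset.sum_empty, sub_zero] at h
  intro m hm
  exact h m (by push_cast; omega)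

lemma degLE_Aν {a : ℕ → H} {A : H →ₗ[ℂ] H} (hA : IsOp a (-1) A) (j : ℕ)
    (IH : ∀ j' : ℕ, 1 ≤ j' → j' < j → ∀ k : ℕ, zc (a k) ((k : ℤ) - j') = 0)
    {ν : H} (hν : degLE ν (-1)) : degLE (A ν) (-(j : ℤ) - 1) := by
  intro m hm
  have hrem := hA.2 ν (-1) hν j m (by omega)
  have hsum : zc (∑ k ∈ Finset.range j, a k * ((Dz ^ k) ν)) m = 0 := by
    rw [zc_sum]
    refine Finset.sum_eq_zero fun k hk => ?_
    rw [Finset.mem_range] at hk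
    have hak : degLE (a k) ((k : ℤ) - j) := by
      intro t ht
      by_cases h0 : 0 ≤ t
      · exact hA.1 k t (by omega)
      · have h1 : 1 ≤ k - t := by omega
        have := IH (k - t).toNat (by omega) (by omega) k
        have he : (k : ℤ) - ((k - t).toNat : ℤ) = t := by omega
        rwa [he] at this
    have := degLE_mul hak (degLE_Dz_pow hν k)
    exact this m (by omega)
  have h2 := zc_sub (A ν) (∑ k ∈ Finset.range j, a k * ((Dz ^ k) ν)) m
  rw [hrem, hsum] at h2
  linear_combination -h2

lemma single_mem_Hplus (n : ℕ) : HahnSeries.single (-(n : ℤ)) (1 : ℂ) ∈ Hplus := by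
  intro t ht
  rw [zc, HahnSeries.coeff_single_of_ne (by omega)]

lemma piPlus_coeff (w : H) (x : ℤ) :
    (piPlus w).coeff x = if 0 < x then 0 else w.coeff x := rfl

end KS
namespace KS

lemma nu_of_piPlus {w : H} {n : ℕ}
    (hpw : piPlus w = HahnSeries.single (-(n : ℤ)) 1) :
    degLE (w - HahnSeries.single (-(n : ℤ)) (1 : ℂ)) (-1) := by
  intro t ht
  have h1 : (piPlus w).coeff (-t) = w.coeff (-t) := by
    rw [piPlus_coeff, if_neg (by omega)]
  rw [zc_sub, zc, zc, ← h1, hpw]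
  ring

lemma stepA {W : Submodule ℂ H} (hW : BigCell W) {a : ℕ → H} {A : H →ₗ[ℂ] H}
    (hA : IsOp a (-1) A) (hstab : Stab A W) (j : ℕ)
    (IH : ∀ j' : ℕ, 1 ≤ j' → j' < j → ∀ k : ℕ, zc (a k) ((k : ℤ) - j') = 0)
    (n : ℕ) (hn : n < j) {w : H} (hw : w ∈ W)
    (hpw : piPlus w = HahnSeries.single (-(n : ℤ)) 1) : A w = 0 := by
  set ζ : H := HahnSeries.single (-(n : ℤ)) (1 : ℂ) with hζ
  have hν : degLE (w - ζ) (-1) := nu_of_piPlus hpw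
  have hsplit : ∀ m : ℤ, zc (A w) m = zc (A ζ) m + zc (A (w - ζ)) m := by
    intro m
    rw [map_sub, zc_sub]; ring
  have hplus0 : piPlus (A w) = 0 := by
    ext x
    rw [piPlus_coeff]
    by_cases hx : 0 < x
    · rw [if_pos hx, HahnSeries.coeff_zero]
    · rw [if_neg hx, HahnSeries.coeff_zero]
      have hcz : (A w).coeff x = zc (A w) (-x) := by rw [zc, neg_neg]
      rw [hcz, hsplit]
      have h1 : zc (A (w - ζ)) (-x) = 0 := degLE_A hA hν (-x) (by omega)
      have h2 : zc (A ζ) (-x) = 0 := by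
        rw [zcA_single hA n (n + 1) (-x) (by push_cast; omega)]
        refine Finset.sum_eq_zero fun k hk => ?_
        by_cases hc : (n : ℤ) + x ≤ 0
        · rw [hA.1 k _ (by omega), mul_zero]
        · have h3 := IH ((n : ℤ) + x).toNat (by omega) (by omega) k
          have he : (k : ℤ) - (((n : ℤ) + x).toNat : ℤ) = -x + ((k : ℤ) - n) := by omega
          rw [he] at h3
          rw [h3, mul_zero]
      rw [h1, h2, add_zero]
  have := hW.2.1 (hstab w hw) W.zero_mem (by rw [hplus0, map_zero])
  exact this

end KS
open KS in
/-- For any point of the big cell there are no nontrivial Kac–Schwarz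
operators in `𝒟₋`. -/
theorem no_negative_KS_operators (W : Submodule ℂ H) (hW : BigCell W)
    (a : ℕ → H) (A : H →ₗ[ℂ] H) (hA : IsOp a (-1) A) (hstab : Stab A W) :
    A = 0 ∧ ∀ k, a k = 0 := by
  classical
  have key : ∀ j : ℕ, 1 ≤ j → ∀ k : ℕ, zc (a k) ((k : ℤ) - j) = 0 := by
    intro j
    induction j using Nat.strong_induction_on with
    | _ j IH =>
      intro hj k
      induction k using Nat.strong_induction_on with
      | _ k IHk =>
        by_cases hkj : j ≤ k
        · exact hA.1 k _ (by omega)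
        · obtain ⟨w, hw, hpw⟩ := hW.2.2 (single_mem_Hplus k)
          have IH' : ∀ j' : ℕ, 1 ≤ j' → j' < j → ∀ k' : ℕ,
              zc (a k') ((k' : ℤ) - j') = 0 := fun j' h1 h2 k' => IH j' h2 h1 k'
          have hAw : A w = 0 := stepA hW hA hstab j IH' k (by omega) hw hpw
          set ζ : H := HahnSeries.single (-(k : ℤ)) (1 : ℂ) with hζ
          have hν : degLE (w - ζ) (-1) := nu_of_piPlus hpw
          have hz : zc (A w) ((k : ℤ) - j) = 0 := by rw [hAw]; rfl
          have hsplit : zc (A w) ((k : ℤ) - j)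
              = zc (A ζ) ((k : ℤ) - j) + zc (A (w - ζ)) ((k : ℤ) - j) := by
            rw [map_sub, zc_sub]; ring
          have h1 : zc (A (w - ζ)) ((k : ℤ) - j) = 0 :=
            degLE_Aν hA j IH' hν ((k : ℤ) - j) (by omega)
          have h2 : zc (A ζ) ((k : ℤ) - j)
              = ∑ k' ∈ Finset.range (k + j), ff k k' * zc (a k') (((k : ℤ) - j) + ((k' : ℤ) - k)) :=
            zcA_single hA k (k + j) _ (by push_cast; omega)
          have h3 : ∑ k' ∈ Finset.range (k + j), ff k k' * zc (a k') (((k : ℤ) - j) + ((k' : ℤ) - k))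
              = ff k k * zc (a k) ((k : ℤ) - j) := by
            rw [Finset.sum_eq_single k]
            · have he : ((k : ℤ) - j) + ((k : ℤ) - k) = (k : ℤ) - j := by ring
              rw [he]
            · intro k' hk' hne
              rcases lt_or_gt_of_ne hne with h | h
              · have he : ((k : ℤ) - j) + ((k' : ℤ) - k) = (k' : ℤ) - j := by ring
                rw [he, IHk k' h, mul_zero]
              · rw [ff_eq_zero h, zero_mul]
            · intro hmem
              exact absurd (Finset.mem_range.mpr (by omega)) hmem
          have h4 : ff k k * zc (a k) ((k : ℤ) - j) = 0 := by
            rw [← h3, ← h2]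
            linear_combination hz - h1 - hsplit
          rcases mul_eq_zero.mp h4 with h | h
          · exact absurd h (ff_self_ne_zero k)
          · exact h
  have ha0 : ∀ k, a k = 0 := by
    intro k
    ext x
    rw [HahnSeries.coeff_zero]
    have hcz : (a k).coeff x = zc (a k) (-x) := by rw [zc, neg_neg]
    rw [hcz]
    by_cases hx : 1 ≤ x
    · have := key (k + x.toNat) (by omega) k
      have he : (k : ℤ) - ((k + x.toNat : ℕ) : ℤ) = -x := by push_cast; omega
      rwa [he] at this
    · exact hA.1 k _ (by omega)
  refine ⟨?_, ha0⟩
  refine LinearMap.ext fun f => ?_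
  have hd : ∃ d : ℤ, degLE f d := by
    by_cases hf : f = 0
    · exact ⟨0, fun t ht => by simp [hf, zc]⟩
    · exact ⟨-f.order, fun t ht => HahnSeries.coeff_eq_zero_of_lt_order (by omega)⟩
  obtain ⟨d, hdf⟩ := hd
  rw [LinearMap.zero_apply]
  ext x
  rw [HahnSeries.coeff_zero]
  have hcz : (A f).coeff x = zc (A f) (-x) := by rw [zc, neg_neg]
  rw [hcz]
  set N : ℕ := (d + x).toNat + 1 with hN
  have hrem := hA.2 f d hdf N (-x) (by omega)
  have hsum : (∑ k ∈ Finset.range N, a k * ((Dz ^ k) f)) = 0 :=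
    Finset.sum_eq_zero fun k _ => by rw [ha0 k, zero_mul]
  rw [hsum, sub_zero] at hrem
  exact hrem
end
end

section
/- Let P = d/dz + Σ_{k≥0} a_k·(d/dz)^k be an endomorphism of H = ℂ((z⁻¹)), where each a_k ∈ ℂ((z⁻¹)) has deg a_k ≤ −2. Then there exists a unique Ψ ∈ 1 + z⁻¹ℂ[[z⁻¹]] with P·Ψ = 0, and every solution of P·Ψ = 0 in ℂ((z⁻¹)) is a complex scalar multiple of this Ψ. In particular, the quantum spectral curve equation P·Ψ = 0 has a unique monic solution (leading coefficient equal to 1), and it is of the form 1 + O(z⁻¹). -/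
noncomputable section

/-- `f` is monic: its leading coefficient equals `1`. -/
def IsMonic (f : H) : Prop := ∃ d : ℤ, degLE f d ∧ zc f d = 1

section QSCaux

lemma zc_add (f g : H) (k : ℤ) : zc (f + g) k = zc f k + zc g k := rfl

lemma zc_sub (f g : H) (k : ℤ) : zc (f - g) k = zc f k - zc g k := by
  simp [zc, HahnSeries.coeff_sub]

lemma zc_smul (c : ℂ) (f : H) (k : ℤ) : zc (c • f) k = c * zc f k := by
  simp [zc, HahnSeries.coeff_smul]

lemma zc_zero (k : ℤ) : zc (0 : H) k = 0 := rfl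

lemma zc_one (k : ℤ) : zc (1 : H) k = if k = 0 then 1 else 0 := by
  simp [zc, HahnSeries.coeff_one, neg_eq_zero]

lemma zc_Dz (f : H) (m : ℤ) : zc (Dz f) m = ((m + 1 : ℤ) : ℂ) * zc f (m + 1) := by
  show ((1 - (-m) : ℤ) : ℂ) * f.coeff (-m - 1) = ((m + 1 : ℤ) : ℂ) * f.coeff (-(m + 1))
  rw [show (1 - (-m) : ℤ) = m + 1 by ring, show (-m - 1 : ℤ) = -(m + 1) by ring]

lemma degLE_mono {f : H} {d e : ℤ} (h : degLE f d) (hde : d ≤ e) : degLE f e :=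
  fun k hk => h k (lt_of_le_of_lt hde hk)

lemma degLE_sub {f g : H} {d : ℤ} (hf : degLE f d) (hg : degLE g d) : degLE (f - g) d :=
  fun k hk => by rw [zc_sub, hf k hk, hg k hk, sub_zero]

lemma degLE_smul {f : H} {d : ℤ} (c : ℂ) (hf : degLE f d) : degLE (c • f) d :=
  fun k hk => by rw [zc_smul, hf k hk, mul_zero]

lemma degLE_step {f : H} {d : ℤ} (h : degLE f d) (h0 : zc f d = 0) : degLE f (d - 1) := by
  intro k hk
  rcases eq_or_ne k d with rfl | hkd
  · exact h0
  · exact h k (by omega)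

lemma exists_degLE (f : H) : ∃ d : ℤ, degLE f d :=
  ⟨-f.order, fun k hk => HahnSeries.coeff_eq_zero_of_lt_order (by omega)⟩

lemma eq_zero_of_degLE_all {f : H} (h : ∀ n : ℕ, degLE f (-1 - n)) : f = 0 := by
  have hz : ∀ k : ℤ, zc f k = 0 := by
    intro k
    exact h (-k).toNat k (by omega)
  apply HahnSeries.ext
  funext m
  simpa [zc] using hz (-m)

lemma coeff_ofPS_neg (x : PowerSeries ℂ) (n : ℤ) (hn : n < 0) :
    (HahnSeries.ofPowerSeries ℤ ℂ x).coeff n = 0 := by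
  rw [HahnSeries.ofPowerSeries_apply, HahnSeries.embDomain_notin_range]
  rintro ⟨m, hm⟩
  simp only [Nat.castOrderEmbedding, OrderEmbedding.coe_ofStrictMono] at hm
  omega

/-- Truncated solution, defined recursively. -/
def Phi (A : H →ₗ[ℂ] H) : ℕ → H
  | 0 => 1
  | n + 1 => Phi A n +
      (zc (A (Phi A n)) (-(n : ℤ) - 2) / ((n : ℂ) + 1)) • (HahnSeries.single ((n : ℤ) + 1) (1 : ℂ))

/-- Coefficients of the solution. -/
def psi (A : H →ₗ[ℂ] H) (n : ℕ) : ℂ := zc (Phi A n) (-(n : ℤ))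

/-- The solution. -/
def Psi (A : H →ₗ[ℂ] H) : H := HahnSeries.ofPowerSeries ℤ ℂ (PowerSeries.mk (psi A))

variable (A : H →ₗ[ℂ] H)

lemma Phi_coeff_high (n : ℕ) (k : ℤ) (hk : (n : ℤ) < k) : (Phi A n).coeff k = 0 := by
  induction n generalizing k with
  | zero => simp only [Phi, HahnSeries.coeff_one]; rw [if_neg (by omega)]
  | succ m ih =>
    simp only [Phi, HahnSeries.coeff_add, HahnSeries.coeff_smul, HahnSeries.coeff_single]
    push_cast at hk ⊢
    rw [ih k (by omega), if_neg (by omega)]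
    simp

lemma Phi_coeff_neg (n : ℕ) (k : ℤ) (hk : k < 0) : (Phi A n).coeff k = 0 := by
  induction n with
  | zero => simp only [Phi, HahnSeries.coeff_one]; rw [if_neg (by omega)]
  | succ m ih =>
    simp only [Phi, HahnSeries.coeff_add, HahnSeries.coeff_smul, HahnSeries.coeff_single]
    rw [ih, if_neg (by omega)]
    simp

lemma Phi_stab (n m : ℕ) (h : n ≤ m) : (Phi A m).coeff (n : ℤ) = (Phi A n).coeff (n : ℤ) := by
  induction m with
  | zero => interval_cases n; rfl
  | succ p ih =>
    rcases eq_or_lt_of_le h with rfl | hlt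
    · rfl
    · have hnp : n ≤ p := by omega
      simp only [Phi, HahnSeries.coeff_add, HahnSeries.coeff_smul, HahnSeries.coeff_single]
      rw [ih hnp, if_neg (by omega)]
      simp

lemma Psi_coeff_nat (n : ℕ) : (Psi A).coeff (n : ℤ) = psi A n := by
  rw [Psi, HahnSeries.ofPowerSeries_apply_coeff, PowerSeries.coeff_mk]

lemma zc_Psi_neg (k : ℤ) (hk : 0 < k) : zc (Psi A) k = 0 :=
  coeff_ofPS_neg _ _ (by omega)

lemma degLE_Psi : degLE (Psi A) 0 := fun k hk => zc_Psi_neg A k hk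

lemma zc_Psi_zero : zc (Psi A) 0 = 1 := by
  have : zc (Psi A) 0 = (Psi A).coeff ((0 : ℕ) : ℤ) := by norm_num [zc]
  rw [this, Psi_coeff_nat]
  simp [psi, Phi, zc, HahnSeries.coeff_one]

lemma zc_Psi_nat (j : ℕ) : zc (Psi A) (-(j : ℤ)) = psi A j := by
  rw [zc, neg_neg, Psi_coeff_nat]

lemma Psi_sub_Phi (n : ℕ) : degLE (Psi A - Phi A n) (-(n : ℤ) - 1) := by
  intro k hk
  rw [zc_sub]
  rcases lt_or_ge 0 k with hk0 | hk0
  · rw [zc_Psi_neg A k hk0, zc, Phi_coeff_neg A n (-k) (by omega), sub_zero]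
  · set j : ℕ := (-k).toNat with hj
    have hkj : k = -(j : ℤ) := by omega
    have hjn : j ≤ n := by omega
    rw [hkj, zc_Psi_nat, psi, zc, zc, neg_neg, Phi_stab A j n hjn, sub_self]

lemma psi_succ (n : ℕ) : psi A (n + 1) = zc (A (Phi A n)) (-(n : ℤ) - 2) / ((n : ℂ) + 1) := by
  rw [psi, zc, neg_neg]
  simp only [Phi, HahnSeries.coeff_add, HahnSeries.coeff_smul, HahnSeries.coeff_single]
  rw [Phi_coeff_high A n ((n : ℕ) + 1 : ℕ) (by push_cast; omega), if_pos (by push_cast; ring)]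
  simp

end QSCaux


/-- The quantum spectral curve equation `P · Ψ = 0` with
`P = d/dz + Σ a_k (d/dz)^k`, `deg a_k ≤ -2`, has a unique solution in `1 + z⁻¹ℂ[[z⁻¹]]`;
every solution is a scalar multiple of it, and it is the unique monic solution. -/
theorem quantum_spectral_curve_unique_solution
    (P : H →ₗ[ℂ] H) (a : ℕ → H) (hP : IsOp a (-2) (P - Dz)) :
    ∃ Ψ : H, (Ψ - 1 ∈ Hminus ∧ P Ψ = 0) ∧
      (∀ Φ : H, Φ - 1 ∈ Hminus ∧ P Φ = 0 → Φ = Ψ) ∧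
      (∀ Φ : H, P Φ = 0 → ∃ c : ℂ, Φ = c • Ψ) ∧
      IsMonic Ψ ∧
      (∀ Φ : H, P Φ = 0 → IsMonic Φ → Φ = Ψ) := by
  set A : H →ₗ[ℂ] H := P - Dz with hAdef
  have hPA : ∀ f : H, P f = Dz f + A f := by
    intro f; simp [hAdef]
  have hA : ∀ (f : H) (d : ℤ), degLE f d → degLE (A f) (d - 2) := by
    intro f d hf
    have h := hP.2 f d hf 0
    simp only [Finset.range_zero, Finset.sum_empty, sub_zero, Nat.cast_zero] at h
    exact degLE_mono h (by omega)
  -- key step: top coefficient of a kernel element at nonzero degree vanishes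
  have key : ∀ f : H, P f = 0 → ∀ d : ℤ, degLE f d → d ≠ 0 → zc f d = 0 := by
    intro f hf d hd hd0
    have h1 : zc (Dz f) (d - 1) + zc (A f) (d - 1) = 0 := by
      rw [← zc_add, ← hPA, hf, zc_zero]
    rw [zc_Dz, hA f d hd (d - 1) (by omega), add_zero,
      show d - 1 + 1 = d by ring] at h1
    have hdC : ((d : ℤ) : ℂ) ≠ 0 := Int.cast_ne_zero.mpr hd0
    exact (mul_eq_zero.mp h1).resolve_left hdC
  -- every kernel element has degree ≤ 0
  have deg0 : ∀ f : H, P f = 0 → degLE f 0 := by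
    intro f hf
    have main : ∀ n : ℕ, degLE f (n : ℤ) → degLE f 0 := by
      intro n
      induction n with
      | zero => intro h; simpa using h
      | succ m ih =>
        intro h
        have h0 : zc f ((m : ℤ) + 1) = 0 :=
          key f hf ((m : ℤ) + 1) (by exact_mod_cast h) (by omega)
        have h1 := degLE_step (by exact_mod_cast h : degLE f ((m : ℤ) + 1)) h0
        exact ih (by simpa using h1)
    obtain ⟨d, hd⟩ := exists_degLE f
    exact main (max d 0).toNat
      (by rw [Int.toNat_of_nonneg (le_max_right d 0)]; exact degLE_mono hd (le_max_left d 0))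
  -- kernel elements of degree ≤ -1 vanish
  have negkill : ∀ f : H, P f = 0 → degLE f (-1) → f = 0 := by
    intro f hf h
    apply eq_zero_of_degLE_all
    intro n
    induction n with
    | zero => simpa using h
    | succ m ih =>
      have h0 : zc f (-1 - (m : ℤ)) = 0 := key f hf _ ih (by omega)
      have h1 := degLE_step ih h0
      convert h1 using 1
      push_cast; ring
  -- the constructed solution
  have hPΨ : P (Psi A) = 0 := by
    have hall : ∀ k : ℤ, zc (P (Psi A)) k = 0 := by
      intro k
      rw [hPA, zc_add, zc_Dz]
      rcases le_or_gt (-1) k with hk | hk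
      · have hA0 : zc (A (Psi A)) k = 0 := hA (Psi A) 0 (degLE_Psi A) k (by omega)
        rcases eq_or_lt_of_le hk with rfl | hk1
        · norm_num [hA0]
        · rw [degLE_Psi A (k + 1) (by omega), hA0]; ring
      · set n : ℕ := (-k - 2).toNat with hn
        have hk2 : k = -(n : ℤ) - 2 := by omega
        have hAsplit : zc (A (Psi A)) k = zc (A (Phi A n)) k := by
          have h0 : zc (A (Psi A - Phi A n)) k = 0 :=
            hA _ _ (Psi_sub_Phi A n) k (by omega)
          rw [map_sub, zc_sub] at h0
          exact sub_eq_zero.mp h0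
        have hpsi : zc (Psi A) (k + 1) = psi A (n + 1) := by
          rw [show k + 1 = -((n + 1 : ℕ) : ℤ) by push_cast; omega, zc_Psi_nat]
        rw [hpsi, psi_succ, hAsplit, hk2]
        have hne : ((n : ℂ) + 1) ≠ 0 := Nat.cast_add_one_ne_zero n
        field_simp
        push_cast
        ring
    apply HahnSeries.ext
    funext m
    simpa [zc] using hall (-m)
  have hΨ0 : zc (Psi A) 0 = 1 := zc_Psi_zero A
  -- scalar multiples
  have hscal : ∀ Φ : H, P Φ = 0 → Φ = zc Φ 0 • Psi A := by
    intro Φ hΦ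
    have hg : P (Φ - zc Φ 0 • Psi A) = 0 := by
      rw [map_sub, map_smul, hΦ, hPΨ, smul_zero, sub_zero]
    have hdeg : degLE (Φ - zc Φ 0 • Psi A) (-1) := by
      have h1 : degLE (Φ - zc Φ 0 • Psi A) 0 :=
        degLE_sub (deg0 Φ hΦ) (degLE_smul _ (degLE_Psi A))
      have h2 : zc (Φ - zc Φ 0 • Psi A) 0 = 0 := by
        rw [zc_sub, zc_smul, hΨ0, mul_one, sub_self]
      simpa using degLE_step h1 h2
    have := negkill _ hg hdeg
    rw [sub_eq_zero] at this
    exact this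
  have hmem : Psi A - 1 ∈ Hminus := by
    intro k hk
    rw [zc_sub, zc_one]
    rcases eq_or_lt_of_le hk with rfl | hk1
    · rw [hΨ0, if_pos rfl, sub_self]
    · rw [zc_Psi_neg A k hk1, if_neg (by omega), sub_self]
  refine ⟨Psi A, ⟨hmem, hPΨ⟩, ?_, ?_, ⟨0, degLE_Psi A, hΨ0⟩, ?_⟩
  · rintro Φ ⟨hm, hΦ⟩
    have h1 := hscal Φ hΦ
    have h0 : zc Φ 0 = 1 := by
      have := hm 0 le_rfl
      rw [zc_sub, zc_one, if_pos rfl] at this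
      exact sub_eq_zero.mp this
    rw [h0, one_smul] at h1
    exact h1
  · intro Φ hΦ
    exact ⟨zc Φ 0, hscal Φ hΦ⟩
  · rintro Φ hΦ ⟨d, hdeg, hlead⟩
    have h1 := hscal Φ hΦ
    have hc0 : zc Φ 0 ≠ 0 := by
      intro h0
      have hzero : Φ = 0 := by rw [h1, h0]; exact zero_smul ℂ (Psi A)
      rw [hzero, zc_zero] at hlead
      exact zero_ne_one hlead
    have hd0 : d = 0 := by
      rcases lt_trichotomy d 0 with hlt | heq | hgt
      · exact absurd (hdeg 0 hlt) hc0
      · exact heq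
      · exfalso
        have hz : zc Φ d = 0 := by
          rw [h1, zc_smul, degLE_Psi A d hgt, mul_zero]
        exact zero_ne_one (hz.symm.trans hlead)
    subst hd0
    rw [h1, hlead, one_smul]
end
end

section
/- Let Q = M_z + Σ_{j≥0} a_j·(d/dz)^j be an endomorphism of H = ℂ((z⁻¹)) with deg a_j ≤ −1 for all j. For a sequence (b_k)_{k≥0} in ℂ((z⁻¹)), let B : ℂ[z] → ℂ((z⁻¹)) be the map B·p := Σ_{k=0}^{deg p} b_k·p^{(k)}. If two sequences (b_k) and (b'_k) both satisfy the intertwining relation Q∘B = B∘M_z as maps from ℂ[z] to ℂ((z⁻¹)), and b_0 = b'_0, then b_k = b'_k for all k. (This is the uniqueness underlying the paper's Lemma that an operator B with B₀ = Ψ and Q_W·B = B·z must coincide with Sato's group element: the relation determines all higher coefficients recursively from the zeroth one.) -/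
noncomputable section

def pz (n : ℕ) : H := HahnSeries.single (-(n : ℤ)) 1

lemma pz_mem (n : ℕ) : pz n ∈ Hplus := by
  intro k hk
  unfold zc pz
  rw [HahnSeries.coeff_single_of_ne (by omega)]

lemma zH_mul_pz (n : ℕ) : zH * pz n = pz (n + 1) := by
  unfold zH pz
  rw [HahnSeries.single_mul_single, one_mul]
  congr 1
  push_cast
  ring

lemma Dz_pz (n : ℕ) : Dz (pz n) = (n : ℂ) • pz (n - 1) := by
  ext m
  simp only [Dz, LinearMap.coe_mk, AddHom.coe_mk, pz, HahnSeries.coeff_smul,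
    HahnSeries.coeff_single, smul_eq_mul]
  cases n with
  | zero =>
    simp only [Nat.cast_zero, zero_mul]
    split_ifs with h
    · have : m = 1 := by omega
      subst this; norm_num
    · rw [mul_zero]
  | succ j =>
    have hc : ((j + 1 : ℕ) - 1 : ℕ) = j := rfl
    rw [hc]
    by_cases h : m = -(j : ℤ)
    · subst h
      rw [if_pos (by push_cast; ring), if_pos rfl]
      push_cast; ring
    · rw [if_neg (by push_cast at h ⊢; omega), if_neg (by push_cast at h ⊢; omega)]
      ring

lemma Dzpow_pz (k n : ℕ) : (Dz ^ k) (pz n) = (n.descFactorial k : ℂ) • pz (n - k) := by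
  induction k generalizing n with
  | zero => simp
  | succ k ih =>
    have hnat : n * (n - 1).descFactorial k = n.descFactorial (k + 1) := by
      cases n with
      | zero => simp
      | succ j => rw [Nat.succ_descFactorial_succ]; rfl
    have hsub : n - 1 - k = n - (k + 1) := by omega
    rw [pow_succ, Module.End.mul_apply, Dz_pz, map_smul, ih, smul_smul,
      ← Nat.cast_mul, hnat, hsub]

lemma Dzpow_top (n : ℕ) : (Dz ^ (n + 1)) (pz n) = 0 := by
  rw [Dzpow_pz, Nat.descFactorial_eq_zero_iff_lt.mpr (by omega), Nat.cast_zero]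
  exact zero_smul ℂ (pz (n - (n + 1)))

lemma pz_zero : pz 0 = 1 := by
  unfold pz
  norm_num

/-- An operator `B = Σ b_k (d/dz)^k : ℂ[z] → ℂ((z⁻¹))` intertwining
`Q∘B = B∘M_z` is uniquely determined by its zeroth coefficient `b_0`. -/
theorem intertwiner_determined_by_b0
    (Q : H →ₗ[ℂ] H) (a : ℕ → H) (hQ : IsOp a (-1) (Q - Mz))
    (b b' : ℕ → H) (B B' : H → H)
    (hB : ∀ p ∈ Hplus, ∀ N : ℕ, (Dz ^ N) p = 0 →
      B p = ∑ k ∈ Finset.range N, b k * ((Dz ^ k) p))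
    (hB' : ∀ p ∈ Hplus, ∀ N : ℕ, (Dz ^ N) p = 0 →
      B' p = ∑ k ∈ Finset.range N, b' k * ((Dz ^ k) p))
    (hint : ∀ p ∈ Hplus, Q (B p) = B (zH * p))
    (hint' : ∀ p ∈ Hplus, Q (B' p) = B' (zH * p))
    (h0 : b 0 = b' 0) :
    ∀ k, b k = b' k := by
  have key : ∀ n, B (pz n) = B' (pz n) := by
    intro n
    induction n with
    | zero =>
      rw [hB _ (pz_mem 0) 1 (Dzpow_top 0), hB' _ (pz_mem 0) 1 (Dzpow_top 0)]
      simp [h0]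
    | succ n ih =>
      rw [← zH_mul_pz, ← hint _ (pz_mem n), ← hint' _ (pz_mem n), ih]
  intro k
  induction k using Nat.strong_induction_on with
  | _ k ih =>
    have hkey := key k
    rw [hB _ (pz_mem k) (k+1) (Dzpow_top k), hB' _ (pz_mem k) (k+1) (Dzpow_top k),
      Finset.sum_range_succ, Finset.sum_range_succ,
      Finset.sum_congr rfl (fun j hj => by
        rw [ih j (Finset.mem_range.mp hj)])] at hkey
    have hlast := add_left_cancel hkey
    rw [Dzpow_pz, Nat.sub_self, Nat.descFactorial_self, pz_zero] at hlast
    have hf : ((k.factorial : ℂ)) ≠ 0 := Nat.cast_ne_zero.mpr k.factorial_ne_zero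
    rw [← HahnSeries.single_zero_mul_eq_smul, mul_one] at hlast
    have hs : (HahnSeries.single (0 : ℤ) ((k.factorial : ℂ))) ≠ 0 :=
      HahnSeries.single_ne_zero hf
    exact mul_right_cancel₀ hs hlast
end
end

section
/- Let n ≥ 1 be an integer and w₁, …, w_{n+1} ∈ ℂ. In the ring of formal power series ℂ[[z]], the coefficient of z^{n+1} in the series ∏_{k=1}^{n+1}(1 − w_k z) · ( n + Σ_{k=1}^{n+1} w_k z/(1 − w_k z) )² equals ∏_{k=1}^{n+1}(−w_k) + Σ_{k=1}^{n+1} w_k · ∏_{j≠k}(w_k − w_j). Equivalently, for V''(z) := z^n/∏_{k=1}^{n+1}(1 − w_k z), the residue at z = 0 (the coefficient of z⁻¹ in the Laurent expansion at 0) of (V'''(z))²/(V''(z))³ equals this value, so that the constant θ₋₁ := −(1/24)·res_{z=0}[(V''')²/(V'')³] appearing in the string equation of the deformed generalized Kontsevich model is θ₋₁ = −(1/24)·(∏_{k=1}^{n+1}(−w_k) + Σ_{k=1}^{n+1} w_k ∏_{j≠k}(w_k − w_j)). -/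
noncomputable section

open PowerSeries


private def mkw (v : ℂ) : PowerSeries ℂ := PowerSeries.mk fun m => v ^ m

private lemma coeff_one_sub_mul (w : ℂ) (f : PowerSeries ℂ) (M : ℕ) :
    PowerSeries.coeff (M + 1) ((1 - PowerSeries.C w * PowerSeries.X) * f) =
      PowerSeries.coeff (M + 1) f - w * PowerSeries.coeff M f := by
  rw [sub_mul, one_mul, mul_assoc, map_sub, PowerSeries.coeff_C_mul,
    PowerSeries.coeff_succ_X_mul]

private lemma one_sub_mul_mkw (w : ℂ) :
    (1 - PowerSeries.C w * PowerSeries.X) * mkw w = 1 := by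
  ext m
  cases m with
  | zero => simp [mkw]
  | succ M => rw [coeff_one_sub_mul]; simp [mkw, pow_succ, mul_comm]

private lemma coeff_prod_zero {ι : Type*} [DecidableEq ι] (w : ι → ℂ) (s : Finset ι) :
    ∀ N, s.card < N →
      PowerSeries.coeff N (∏ j ∈ s, (1 - PowerSeries.C (w j) * PowerSeries.X)) = 0 := by
  induction s using Finset.induction_on with
  | empty =>
    intro N hN
    rcases N with _ | M
    · omega
    · simp
  | insert _ _ ha ih =>
    rename_i a s
    intro N hN
    rw [Finset.card_insert_of_notMem ha] at hN
    rcases N with _ | M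
    · omega
    · rw [Finset.prod_insert ha, coeff_one_sub_mul, ih (M + 1) (by omega), ih M (by omega),
        mul_zero, sub_zero]

private lemma coeff_prod_card {ι : Type*} [DecidableEq ι] (w : ι → ℂ) (s : Finset ι) :
    PowerSeries.coeff s.card (∏ j ∈ s, (1 - PowerSeries.C (w j) * PowerSeries.X)) =
      ∏ j ∈ s, (-(w j)) := by
  induction s using Finset.induction_on with
  | empty => simp
  | insert _ _ ha ih =>
    rename_i a s
    rw [Finset.card_insert_of_notMem ha, Finset.prod_insert ha, coeff_one_sub_mul,
      coeff_prod_zero w s _ (by omega), ih, Finset.prod_insert ha]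
    ring

private lemma coeff_prod_mkw {ι : Type*} [DecidableEq ι] (w : ι → ℂ) (v : ℂ) (s : Finset ι) :
    ∀ N, s.card ≤ N →
      PowerSeries.coeff N
          ((∏ j ∈ s, (1 - PowerSeries.C (w j) * PowerSeries.X)) * mkw v) =
        v ^ (N - s.card) * ∏ j ∈ s, (v - w j) := by
  induction s using Finset.induction_on with
  | empty => intro N _; simp [mkw]
  | insert _ _ ha ih =>
    rename_i a s
    intro N hN
    rw [Finset.card_insert_of_notMem ha] at hN ⊢
    rcases N with _ | M
    · omega
    · rw [Finset.prod_insert ha, mul_assoc, coeff_one_sub_mul, ih (M + 1) (by omega),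
        ih M (by omega), Finset.prod_insert ha]
      have h1 : M + 1 - s.card = (M - s.card) + 1 := by omega
      have h2 : M + 1 - (s.card + 1) = M - s.card := by omega
      rw [h1, h2, pow_succ]
      ring

/-- The coefficient of `z^{n+1}` in
`∏_{k}(1 - w_k z)·(n + Σ_k w_k z/(1 - w_k z))²` equals
`∏_k(-w_k) + Σ_k w_k ∏_{j≠k}(w_k - w_j)`; this computes the constant `θ₋₁` in the string
equation of the deformed generalized Kontsevich model. -/
theorem residue_theta_minus_one (n : ℕ) (hn : 1 ≤ n) (w : Fin (n + 1) → ℂ) :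
    PowerSeries.coeff (n + 1)
      ((∏ k, (1 - PowerSeries.C (w k) * PowerSeries.X)) *
        ((n : PowerSeries ℂ) +
          ∑ k, PowerSeries.C (w k) * PowerSeries.X *
            PowerSeries.mk fun m => w k ^ m) ^ 2) =
      (∏ k, (-(w k))) + ∑ k, w k * ∏ j ∈ Finset.univ.erase k, (w k - w j) := by
  show PowerSeries.coeff (n + 1)
      ((∏ k, (1 - PowerSeries.C (w k) * PowerSeries.X)) *
        ((n : PowerSeries ℂ) +
          ∑ k, PowerSeries.C (w k) * PowerSeries.X * mkw (w k)) ^ 2) = _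
  set P : PowerSeries ℂ := ∏ k, (1 - PowerSeries.C (w k) * PowerSeries.X) with hP
  set G : PowerSeries ℂ := ∑ k : Fin (n + 1), mkw (w k) with hG
  -- rewrite the square factor
  have hterm : ∀ k : Fin (n + 1),
      PowerSeries.C (w k) * PowerSeries.X * mkw (w k) = mkw (w k) - 1 := by
    intro k
    linear_combination -one_sub_mul_mkw (w k)
  have hF : (n : PowerSeries ℂ) +
      ∑ k : Fin (n + 1), PowerSeries.C (w k) * PowerSeries.X * mkw (w k) = G - 1 := by
    simp only [hterm, Finset.sum_sub_distrib, Finset.sum_const, Finset.card_univ,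
      Fintype.card_fin, nsmul_eq_mul, mul_one, hG]
    push_cast
    ring
  rw [hF]
  -- P*G as a sum of polynomial-like products
  have hQ : ∀ k : Fin (n + 1), P * mkw (w k) =
      ∏ j ∈ Finset.univ.erase k, (1 - PowerSeries.C (w j) * PowerSeries.X) := by
    intro k
    rw [hP, ← Finset.prod_erase_mul _ _ (Finset.mem_univ k), mul_assoc, one_sub_mul_mkw,
      mul_one]
  set Q : Fin (n + 1) → PowerSeries ℂ :=
    fun k => ∏ j ∈ Finset.univ.erase k, (1 - PowerSeries.C (w j) * PowerSeries.X) with hQdef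
  have hPG : P * G = ∑ k, Q k := by
    rw [hG, Finset.mul_sum]
    exact Finset.sum_congr rfl fun k _ => hQ k
  have expand : P * (G - 1) ^ 2 = (∑ k, Q k) * G - (∑ k, Q k) - (∑ k, Q k) + P := by
    rw [← hPG]; ring
  rw [expand]
  have hcardE : ∀ k : Fin (n + 1), (Finset.univ.erase k).card = n := by
    intro k
    rw [Finset.card_erase_of_mem (Finset.mem_univ k), Finset.card_univ, Fintype.card_fin]
    omega
  have hQzero : ∀ k : Fin (n + 1), PowerSeries.coeff (n + 1) (Q k) = 0 := by
    intro k
    exact coeff_prod_zero w _ _ (by rw [hcardE]; omega)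
  -- the double sum
  have hQG : PowerSeries.coeff (n + 1) ((∑ k, Q k) * G) =
      ∑ k, w k * ∏ j ∈ Finset.univ.erase k, (w k - w j) := by
    rw [hG, Finset.sum_mul]
    rw [map_sum]
    refine Finset.sum_congr rfl fun k _ => ?_
    rw [Finset.mul_sum, map_sum]
    rw [Finset.sum_eq_single k]
    · show PowerSeries.coeff (n + 1)
          ((∏ j ∈ Finset.univ.erase k, (1 - PowerSeries.C (w j) * PowerSeries.X)) *
            mkw (w k)) = _
      rw [coeff_prod_mkw w (w k) (Finset.univ.erase k) (n + 1) (by rw [hcardE]; omega), hcardE]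
      have h1 : n + 1 - n = 1 := by omega
      rw [h1, pow_one]
    · intro l _ hlk
      have hl : l ∈ Finset.univ.erase k := Finset.mem_erase.2 ⟨hlk, Finset.mem_univ l⟩
      show PowerSeries.coeff (n + 1)
          ((∏ j ∈ Finset.univ.erase k, (1 - PowerSeries.C (w j) * PowerSeries.X)) *
            mkw (w l)) = 0
      rw [← Finset.mul_prod_erase _ _ hl, mul_comm (1 - PowerSeries.C (w l) * PowerSeries.X),
        mul_assoc, one_sub_mul_mkw, mul_one]
      refine coeff_prod_zero w _ _ ?_
      rw [Finset.card_erase_of_mem hl, hcardE]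
      omega
    · intro h; exact absurd (Finset.mem_univ k) h
  have hPcoeff : PowerSeries.coeff (n + 1) P = ∏ k, (-(w k)) := by
    have := coeff_prod_card w (Finset.univ : Finset (Fin (n + 1)))
    rwa [Finset.card_univ, Fintype.card_fin] at this
  rw [map_add, map_sub, map_sub, hQG, map_sum]
  simp only [hQzero, Finset.sum_const_zero, sub_zero, hPcoeff]
  ring
end
end
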